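/- Let ε = (1+√5)/2 and b ≥ 1/2. For all c with ε⁻¹ ≤ c ≤ 1, setting a = c − ε⁻¹ − 1/√5, the quantity Δ = (√5·a(5a²−1))/16 + (√5·b/2)·[(a−1)c + (a+1)/c] is nonpositive. -/

import Mathlib

set_option maxHeartbeats 1000000


theorem stmt8 (ε b c a : ℝ) (hε : ε = (1 + Real.sqrt 5) / 2)
    (hb : 1 / 2 ≤ b) (hc1 : ε⁻¹ ≤ c) (hc2 : c ≤ 1)
    (ha : a = c - ε⁻¹ - 1 / Real.sqrt 5) :
    Real.sqrt 5 * (a * (5 * a ^ 2 - 1)) / 16 +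
      Real.sqrt 5 * b / 2 * ((a - 1) * c + (a + 1) / c) ≤ 0 := by
  set s := Real.sqrt 5 with hsdef
  have hs : s ^ 2 = 5 := Real.sq_sqrt (by norm_num)
  have hs0 : 0 ≤ s := Real.sqrt_nonneg 5
  have h2 : 2 < s := by nlinarith
  have hεinv : ε⁻¹ = (s - 1) / 2 := by
    rw [hε, inv_div, div_eq_div_iff (by nlinarith) (by norm_num)]
    nlinarith
  rw [hεinv] at hc1 ha
  have hc0 : 0 < c := by nlinarith
  have hT : (a - 1) * c + (a + 1) / c ≤ 0 := by
    rw [← mul_le_mul_iff_of_pos_right hc0, zero_mul]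
    have : ((a - 1) * c + (a + 1) / c) * c = (a - 1) * c ^ 2 + (a + 1) := by
      field_simp
    rw [this, ha]
    have hsne : s ≠ 0 := by positivity
    have h1s : 1 / s = s / 5 := by
      rw [div_eq_div_iff (by positivity) (by norm_num)]; nlinarith
    rw [h1s]
    nlinarith [mul_nonneg (sub_nonneg.2 hc1) (sub_nonneg.2 hc2), sq_nonneg (c - (s-1)/2), sq_nonneg (1 - c), mul_nonneg (mul_nonneg (sub_nonneg.2 hc1) (sub_nonneg.2 hc2)) hc0.le, mul_nonneg (sub_nonneg.2 hc1) hc0.le, h2.le]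
  have h1s : 1 / s = s / 5 := by
    rw [div_eq_div_iff (by positivity) (by norm_num)]; nlinarith
  have hfirst : s * (a * (5 * a ^ 2 - 1)) / 16 + s / 4 * ((a - 1) * c + (a + 1) / c) ≤ 0 := by
    rw [← mul_le_mul_iff_of_pos_right hc0, zero_mul]
    have hexp : (s * (a * (5 * a ^ 2 - 1)) / 16 + s / 4 * ((a - 1) * c + (a + 1) / c)) * c
        = s * (a * (5 * a ^ 2 - 1)) * c / 16 + s / 4 * ((a - 1) * c ^ 2 + (a + 1)) := by
      field_simp
    rw [hexp, ha, h1s]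
    have hu : 0 ≤ c - (s - 1) / 2 := sub_nonneg.2 hc1
    have hv : 0 ≤ 1 - c := sub_nonneg.2 hc2
    have h3 : s < 3 := by nlinarith
    have hh : 9 - 21*s/5 + (-27/2 + 47*s/10)*(c - (s - 1) / 2)
        + (3/2 - s/2)*(c - (s - 1) / 2)^2 + 5*(c - (s - 1) / 2)^3 ≤ 0 := by
      nlinarith [mul_nonneg hu hv, mul_nonneg (mul_nonneg hu hv) hu,
        mul_nonneg (mul_nonneg hu hv) hv, mul_nonneg hu hu,
        mul_nonneg (mul_nonneg hu hu) hu]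
    have hid : s * ((c - (s - 1) / 2 - s / 5) * (5 * (c - (s - 1) / 2 - s / 5) ^ 2 - 1)) * c / 16
        + s / 4 * ((c - (s - 1) / 2 - s / 5 - 1) * c ^ 2 + (c - (s - 1) / 2 - s / 5 + 1))
        = s / 16 * ((c - (s - 1) / 2) * (9 - 21*s/5 + (-27/2 + 47*s/10)*(c - (s - 1) / 2)
          + (3/2 - s/2)*(c - (s - 1) / 2)^2 + 5*(c - (s - 1) / 2)^3)) := by
      linear_combination (-7*s/128 + 9*s^2/320 - 3*s^3/128 - c*s/16 + 29*c*s^2/400 - 9*c^2*s/160) * hs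
    rw [hid]
    have hmul : (c - (s - 1) / 2) * (9 - 21*s/5 + (-27/2 + 47*s/10)*(c - (s - 1) / 2)
        + (3/2 - s/2)*(c - (s - 1) / 2)^2 + 5*(c - (s - 1) / 2)^3) ≤ 0 :=
      mul_nonpos_of_nonneg_of_nonpos hu hh
    have hs16 : 0 ≤ s / 16 := by positivity
    exact mul_nonpos_of_nonneg_of_nonpos hs16 hmul
  have hbb : s * b / 2 * ((a - 1) * c + (a + 1) / c) ≤ s / 4 * ((a - 1) * c + (a + 1) / c) := by
    apply mul_le_mul_of_nonpos_right _ hT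
    have h4 := mul_le_mul_of_nonneg_left hb hs0
    linarith
  linarith
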